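/- arXiv:2605.21067 — 3 statements merged into one kernel-verified Lean document; each statement's English description precedes it below -/
import Mathlib

section
/- Reflection of binomial convolutions: let (g_ℓ)_{ℓ=0}^{r} be complex-valued functions on the upper half-plane satisfying g_ℓ(-1/z)/z^{w-r-ℓ} = Σ_{m=0}^{r-ℓ} C(r-ℓ, m) g_{ℓ+m}(z) z^{r-ℓ-m} for all ℓ. Then for every 0 ≤ n ≤ r, (1/z^{w-r}) Σ_{ℓ=0}^{n} C(n,ℓ) g_ℓ(-1/z) (-1/z)^{n-ℓ} = (-1)^n Σ_{m=0}^{r-n} C(r-n, m) g_m(z) z^{r-n-m}. -/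
lemma pascal_split (f : ℕ → ℂ) (u : ℂ) (n : ℕ) :
    ∑ ℓ ∈ Finset.range (n + 2), (Nat.choose (n + 1) ℓ : ℂ) * f ℓ * u ^ (n + 1 - ℓ)
    = u * ∑ ℓ ∈ Finset.range (n + 1), (Nat.choose n ℓ : ℂ) * f ℓ * u ^ (n - ℓ)
      + ∑ ℓ ∈ Finset.range (n + 1), (Nat.choose n ℓ : ℂ) * f (ℓ + 1) * u ^ (n - ℓ) := by
  rw [Finset.sum_range_succ' _ (n + 1)]
  have h1 : ∀ i ∈ Finset.range (n + 1),
      (Nat.choose (n + 1) (i + 1) : ℂ) * f (i + 1) * u ^ (n + 1 - (i + 1))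
      = ((Nat.choose n i : ℂ) * f (i + 1) * u ^ (n - i)
        + (Nat.choose n (i + 1) : ℂ) * f (i + 1) * u ^ (n - i)) := by
    intro i _
    rw [Nat.choose_succ_succ, Nat.succ_sub_succ]
    push_cast
    ring
  rw [Finset.sum_congr rfl h1, Finset.sum_add_distrib]
  have h2 : u * ∑ ℓ ∈ Finset.range (n + 1), (Nat.choose n ℓ : ℂ) * f ℓ * u ^ (n - ℓ)
      = (∑ i ∈ Finset.range (n + 1), (Nat.choose n (i + 1) : ℂ) * f (i + 1) * u ^ (n - i))
        + (Nat.choose (n + 1) 0 : ℂ) * f 0 * u ^ (n + 1 - 0) := by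
    have h3 : ∑ i ∈ Finset.range (n + 1), (Nat.choose n (i + 1) : ℂ) * f (i + 1) * u ^ (n - i)
        = ∑ i ∈ Finset.range n, (Nat.choose n (i + 1) : ℂ) * f (i + 1) * u ^ (n - i) := by
      rw [Finset.sum_range_succ, Nat.choose_succ_self]
      simp
    rw [h3, Finset.mul_sum]
    have h4 : ∀ ℓ ∈ Finset.range (n + 1),
        u * ((Nat.choose n ℓ : ℂ) * f ℓ * u ^ (n - ℓ))
        = (Nat.choose n ℓ : ℂ) * f ℓ * u ^ (n + 1 - ℓ) := by
      intro ℓ hℓ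
      simp only [Finset.mem_range] at hℓ
      have : n + 1 - ℓ = (n - ℓ) + 1 := by omega
      rw [this, pow_succ]
      ring
    rw [Finset.sum_congr rfl h4, Finset.sum_range_succ' (fun ℓ => (Nat.choose n ℓ : ℂ) * f ℓ * u ^ (n + 1 - ℓ)) n]
    simp [Nat.succ_sub_succ]
  rw [h2]
  ring

lemma aux9 (z : ℂ) (hz : z ≠ 0) :
    ∀ (n : ℕ) (w : ℤ) (r : ℕ) (g : ℂ → ℕ → ℂ),
    (∀ ℓ ≤ r, g (-1 / z) ℓ / z ^ (w - (r : ℤ) - (ℓ : ℤ)) =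
      ∑ m ∈ Finset.range (r - ℓ + 1),
        (Nat.choose (r - ℓ) m : ℂ) * g z (ℓ + m) * z ^ (r - ℓ - m)) →
    n ≤ r →
      (1 / z ^ (w - (r : ℤ))) * ∑ ℓ ∈ Finset.range (n + 1),
          (Nat.choose n ℓ : ℂ) * g (-1 / z) ℓ * (-1 / z) ^ (n - ℓ) =
        (-1 : ℂ) ^ n * ∑ m ∈ Finset.range (r - n + 1),
          (Nat.choose (r - n) m : ℂ) * g z m * z ^ (r - n - m) := by
  intro n
  induction n with
  | zero =>
    intro w r g hg _
    have h := hg 0 (Nat.zero_le r)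
    simp only [Nat.cast_zero, sub_zero, Nat.sub_zero, Nat.add_zero, zero_add] at h ⊢
    rw [Finset.sum_range_one]
    simp only [Nat.choose_self, Nat.cast_one, one_mul, Nat.sub_self, pow_zero, mul_one]
    rw [one_div, inv_mul_eq_div, h]
  | succ n ih =>
    intro w r g hg hn
    obtain ⟨s, rfl⟩ : ∃ s, r = n + 1 + s := ⟨r - (n + 1), by omega⟩
    -- shifted hypothesis
    have hg' : ∀ ℓ ≤ n + s, (fun x k => g x (k + 1)) (-1 / z) ℓ / z ^ ((w - 2) - ((n + s : ℕ) : ℤ) - (ℓ : ℤ)) =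
        ∑ m ∈ Finset.range (n + s - ℓ + 1),
          (Nat.choose (n + s - ℓ) m : ℂ) * (fun x k => g x (k + 1)) z (ℓ + m) * z ^ (n + s - ℓ - m) := by
      intro ℓ hℓ
      have h := hg (ℓ + 1) (by omega)
      have e1 : n + 1 + s - (ℓ + 1) = n + s - ℓ := by omega
      have e2 : (w - 2) - ((n + s : ℕ) : ℤ) - (ℓ : ℤ) = w - ((n + 1 + s : ℕ) : ℤ) - ((ℓ + 1 : ℕ) : ℤ) := by
        push_cast; ring
      rw [e1] at h
      simp only [e2]
      rw [h]
      exact Finset.sum_congr rfl fun m _ => by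
        simp only [show ℓ + 1 + m = ℓ + m + 1 from by omega]
    have hA := ih w (n + 1 + s) g hg (by omega)
    have hB := ih (w - 2) (n + s) (fun x k => g x (k + 1)) hg' (by omega)
    have eA : n + 1 + s - n = s + 1 := by omega
    have eB : n + s - n = s := by omega
    rw [eA] at hA
    rw [eB] at hB
    -- Pascal split on the LHS sum (u = -1/z)
    rw [pascal_split (fun ℓ => g (-1 / z) ℓ) (-1 / z) n]
    -- Pascal split on A' : the RHS of hA
    rw [pascal_split (fun m => g z m) z s] at hA
    have e3 : n + 1 + s - (n + 1) = s := by omega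
    rw [e3]
    -- exponent relation: z ^ (w - (n+1+s)) = z * z ^ ((w-2) - (n+s))
    have ezp : z ^ (w - ((n + 1 + s : ℕ) : ℤ)) = z * z ^ ((w - 2) - ((n + s : ℕ) : ℤ)) := by
      have : w - ((n + 1 + s : ℕ) : ℤ) = ((w - 2) - ((n + s : ℕ) : ℤ)) + 1 := by push_cast; ring
      rw [this, zpow_add_one₀ hz]
      ring
    set S := ∑ ℓ ∈ Finset.range (n + 1), (Nat.choose n ℓ : ℂ) * g (-1 / z) ℓ * (-1 / z) ^ (n - ℓ) with hS
    set T := ∑ ℓ ∈ Finset.range (n + 1), (Nat.choose n ℓ : ℂ) * g (-1 / z) (ℓ + 1) * (-1 / z) ^ (n - ℓ) with hT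
    set C := ∑ m ∈ Finset.range (s + 1), (Nat.choose s m : ℂ) * g z m * z ^ (s - m) with hC
    set B := ∑ m ∈ Finset.range (s + 1), (Nat.choose s m : ℂ) * g z (m + 1) * z ^ (s - m) with hB2
    -- hA : (1 / z ^ (w - (n+1+s))) * S = (-1)^n * (z * C + B)
    -- hB : (1 / z ^ ((w-2) - (n+s))) * T = (-1)^n * B
    have hzp : z ^ ((w - 2) - ((n + s : ℕ) : ℤ)) ≠ 0 := zpow_ne_zero _ hz
    have hzp2 : z ^ (w - ((n + 1 + s : ℕ) : ℤ)) ≠ 0 := zpow_ne_zero _ hz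
    rw [mul_add, ezp]
    have hT' : (1 / (z * z ^ ((w - 2) - ((n + s : ℕ) : ℤ)))) * T = (1 / z) * ((-1 : ℂ) ^ n * B) := by
      rw [← hB]; field_simp
      try ring
    rw [hT']
    have hS' : (1 / (z * z ^ ((w - 2) - ((n + s : ℕ) : ℤ)))) * ((-1 / z) * S) = (-1 / z) * ((-1 : ℂ) ^ n * (z * C + B)) := by
      rw [← hA, ezp]; field_simp
      try ring
    rw [hS']
    field_simp
    ring

/-- Reflection of binomial convolutions (Corollary to the main Proposition).
`g z ℓ` plays the role of `g_ℓ(z)`; the hypothesis encodes the transformation law of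
the `g_ℓ` under `S : z ↦ -1/z`. -/
theorem stmt9 (w : ℤ) (r : ℕ) (g : ℂ → ℕ → ℂ) (z : ℂ) (hz : z ≠ 0)
    (hg : ∀ ℓ ≤ r, g (-1 / z) ℓ / z ^ (w - (r : ℤ) - (ℓ : ℤ)) =
      ∑ m ∈ Finset.range (r - ℓ + 1),
        (Nat.choose (r - ℓ) m : ℂ) * g z (ℓ + m) * z ^ (r - ℓ - m)) :
    ∀ n ≤ r,
      (1 / z ^ (w - (r : ℤ))) * ∑ ℓ ∈ Finset.range (n + 1),
          (Nat.choose n ℓ : ℂ) * g (-1 / z) ℓ * (-1 / z) ^ (n - ℓ) =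
        (-1 : ℂ) ^ n * ∑ m ∈ Finset.range (r - n + 1),
          (Nat.choose (r - n) m : ℂ) * g z m * z ^ (r - n - m) := by
  intro n hn
  exact aux9 z hz n w r g hg hn
end

section
/- Abstract transformation law: suppose sequences (F_k)_{k=0}^r and (G_k)_{k=0}^r of complex numbers (depending on z in the upper half-plane) satisfy F_n(z) = Σ_{k=0}^{n} C(n,k) G_k(z) z^{n-k}, and the G's satisfy G_ℓ(-1/z) = z^{w-r-ℓ}·Σ_{m=0}^{r-ℓ} C(r-ℓ,m) G_{ℓ+m}(z) z^{r-ℓ-m}. Then F_k(-1/z)/z^{w-r} = (-1)^k F_{r-k}(z) for all 0 ≤ k ≤ r. -/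
open Finset Polynomial

lemma poly_key (r k : ℕ) (hk : k ≤ r) :
    ((1 + X : ℂ[X]) ^ (r - k)) =
      ∑ j ∈ range (k + 1), (Nat.choose k j : ℂ[X]) * ((1 + X) ^ (r - j) * (-X) ^ j) := by
  have h : ((-X) + (1 + X) : ℂ[X]) = 1 := by ring
  conv_lhs => rw [show ((1:ℂ[X])+X)^(r-k) = (1+X)^(r-k) * ((-X)+(1+X))^k by
    rw [h, one_pow, mul_one]]
  rw [add_pow (-X) (1+X) k, Finset.mul_sum]
  refine Finset.sum_congr rfl fun j hj => ?_
  have hj' : j ≤ k := Nat.lt_succ_iff.mp (Finset.mem_range.mp hj)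
  have h2 : r - k + (k - j) = r - j := by omega
  rw [← h2, pow_add]; ring

lemma key (r k n : ℕ) (hk : k ≤ r) :
    ∑ j ∈ range (k + 1), ((-1 : ℂ) ^ j * (Nat.choose k j : ℂ) *
      (if j ≤ n then (Nat.choose (r - j) (n - j) : ℂ) else 0)) =
      (Nat.choose (r - k) n : ℂ) := by
  have h := congrArg (fun p => Polynomial.coeff p n) (poly_key r k hk)
  simp only [Polynomial.finset_sum_coeff] at h
  rw [Polynomial.coeff_one_add_X_pow] at h
  rw [h]
  refine Finset.sum_congr rfl fun j hj => ?_
  have hrw : ((Nat.choose k j : ℂ[X]) * ((1 + X) ^ (r - j) * (-X) ^ j)) =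
      C ((-1 : ℂ)^j * (Nat.choose k j : ℂ)) * ((1+X)^(r-j) * X^j) := by
    rw [neg_pow]
    simp only [map_mul, map_pow, map_natCast, map_neg, map_one]
    ring
  rw [hrw, Polynomial.coeff_C_mul, Polynomial.coeff_mul_X_pow']
  simp [Polynomial.coeff_one_add_X_pow, mul_ite]

/-- Abstract transformation law: `G z ℓ` plays the role of `G_ℓ(z)`, and
`F w n = Σ_{k=0}^{n} C(n,k) G w k · w^{n-k}` is the binomial convolution. Under the
transformation hypothesis on the `G`'s, `F_k(-1/z)/z^{w-r} = (-1)^k F_{r-k}(z)`. -/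
theorem stmt10 (w : ℤ) (r : ℕ) (G : ℂ → ℕ → ℂ) (z : ℂ) (hz : z ≠ 0)
    (F : ℂ → ℕ → ℂ)
    (hF : ∀ u : ℂ, ∀ n : ℕ, F u n =
      ∑ k ∈ Finset.range (n + 1), (Nat.choose n k : ℂ) * G u k * u ^ (n - k))
    (hG : ∀ ℓ ≤ r, G (-1 / z) ℓ =
      z ^ (w - (r : ℤ) - (ℓ : ℤ)) * ∑ m ∈ Finset.range (r - ℓ + 1),
        (Nat.choose (r - ℓ) m : ℂ) * G z (ℓ + m) * z ^ (r - ℓ - m)) :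
    ∀ k ≤ r, F (-1 / z) k / z ^ (w - (r : ℤ)) = (-1 : ℂ) ^ k * F z (r - k) := by
  intro k hk
  have hzp : (z:ℂ) ^ (w - (r:ℤ)) ≠ 0 := zpow_ne_zero _ hz
  rw [div_eq_iff hzp, hF, hF]
  -- the power lemma for the LHS
  have hp : ∀ j m : ℕ, j ≤ k → m ≤ r - j →
      z ^ (w - (r:ℤ) - (j:ℤ)) * z ^ (r - j - m) * (-1/z) ^ (k - j)
        = (-1:ℂ) ^ (k - j) * z ^ (w - ((j:ℤ) + (m:ℤ)) - (k:ℤ)) := by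
    intro j m hj hm
    have h1 : ((-1 : ℂ)/z)^(k-j) = (-1)^(k-j) * z ^ (-((k - j : ℕ) : ℤ)) := by
      rw [div_pow, zpow_neg, zpow_natCast, div_eq_mul_inv]
    have key2 : (z:ℂ) ^ (w - (r:ℤ) - (j:ℤ)) * z ^ ((r - j - m : ℕ)) *
        z ^ (-((k - j : ℕ) : ℤ)) = z ^ (w - ((j:ℤ) + (m:ℤ)) - (k:ℤ)) := by
      rw [← zpow_natCast z (r - j - m), ← zpow_add₀ hz, ← zpow_add₀ hz]
      congr 1
      omega
    rw [h1]
    linear_combination ((-1:ℂ)^(k-j)) * key2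
  -- per-j expansion of the LHS
  have hterm : ∀ j, j ≤ k → ((Nat.choose k j : ℂ) * G (-1/z) j * (-1/z) ^ (k - j))
      = ∑ n ∈ Finset.range (r + 1),
          ((-1:ℂ) ^ (k - j) * (Nat.choose k j : ℂ) *
            (if j ≤ n then (Nat.choose (r - j) (n - j) : ℂ) else 0)) * G z n *
            z ^ (w - (n:ℤ) - (k:ℤ)) := by
    intro j hj
    have hjr : j ≤ r := hj.trans hk
    have h0 : ∑ n ∈ Finset.Ico 0 j,
        ((-1:ℂ) ^ (k - j) * (Nat.choose k j : ℂ) *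
          (if j ≤ n then (Nat.choose (r - j) (n - j) : ℂ) else 0)) * G z n *
          z ^ (w - (n:ℤ) - (k:ℤ)) = 0 := by
      refine Finset.sum_eq_zero fun n hn => ?_
      have : ¬ j ≤ n := by simp only [Finset.mem_Ico] at hn; omega
      simp [this]
    have hreidx : (∑ n ∈ Finset.range (r + 1),
        ((-1:ℂ) ^ (k - j) * (Nat.choose k j : ℂ) *
          (if j ≤ n then (Nat.choose (r - j) (n - j) : ℂ) else 0)) * G z n *
          z ^ (w - (n:ℤ) - (k:ℤ)))
        = ∑ m ∈ Finset.range (r - j + 1),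
          ((-1:ℂ) ^ (k - j) * (Nat.choose k j : ℂ) *
            (if j ≤ j + m then (Nat.choose (r - j) (j + m - j) : ℂ) else 0)) * G z (j + m) *
            z ^ (w - ((j:ℤ) + (m:ℤ)) - (k:ℤ)) := by
      have hIco : (∑ n ∈ Finset.Ico j (r + 1),
          ((-1:ℂ) ^ (k - j) * (Nat.choose k j : ℂ) *
            (if j ≤ n then (Nat.choose (r - j) (n - j) : ℂ) else 0)) * G z n *
            z ^ (w - (n:ℤ) - (k:ℤ)))
          = ∑ m ∈ Finset.range (r - j + 1),
            ((-1:ℂ) ^ (k - j) * (Nat.choose k j : ℂ) *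
              (if j ≤ j + m then (Nat.choose (r - j) (j + m - j) : ℂ) else 0)) * G z (j + m) *
              z ^ (w - ((j:ℤ) + (m:ℤ)) - (k:ℤ)) := by
        rw [Finset.sum_Ico_eq_sum_range, show r + 1 - j = r - j + 1 by omega]
        refine Finset.sum_congr rfl fun m hm => ?_
        norm_num
      rw [← hIco, Finset.range_eq_Ico,
        ← Finset.sum_Ico_consecutive _ (Nat.zero_le j) (show j ≤ r + 1 by omega), h0,
        zero_add]
    rw [hG j hjr, hreidx, Finset.mul_sum, Finset.mul_sum, Finset.sum_mul]
    refine Finset.sum_congr rfl fun m hm => ?_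
    have hm' : m ≤ r - j := Nat.lt_succ_iff.mp (Finset.mem_range.mp hm)
    rw [if_pos (Nat.le_add_right j m), Nat.add_sub_cancel_left]
    have hpw := hp j m hj hm'
    linear_combination ((Nat.choose k j : ℂ) * (Nat.choose (r - j) m : ℂ) * G z (j + m)) * hpw
  have hL : (∑ j ∈ Finset.range (k + 1),
        (Nat.choose k j : ℂ) * G (-1/z) j * (-1/z) ^ (k - j))
      = ∑ n ∈ Finset.range (r + 1), ∑ j ∈ Finset.range (k + 1),
          ((-1:ℂ) ^ (k - j) * (Nat.choose k j : ℂ) *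
            (if j ≤ n then (Nat.choose (r - j) (n - j) : ℂ) else 0)) * G z n *
            z ^ (w - (n:ℤ) - (k:ℤ)) := by
    rw [Finset.sum_congr rfl fun j hj =>
      hterm j (Nat.lt_succ_iff.mp (Finset.mem_range.mp hj))]
    exact Finset.sum_comm
  rw [hL]
  -- now the RHS
  have hsign : ∀ j ≤ k, (-1:ℂ) ^ k * (-1:ℂ) ^ j = (-1:ℂ) ^ (k - j) := by
    intro j hj
    conv_lhs => rw [← Nat.sub_add_cancel hj, pow_add]
    rw [mul_assoc, ← mul_pow]
    norm_num
  have hinner : ∀ n : ℕ, ∑ j ∈ Finset.range (k + 1),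
      ((-1:ℂ) ^ (k - j) * (Nat.choose k j : ℂ) *
        (if j ≤ n then (Nat.choose (r - j) (n - j) : ℂ) else 0)) * G z n *
        z ^ (w - (n:ℤ) - (k:ℤ))
      = ((-1:ℂ) ^ k * (Nat.choose (r - k) n : ℂ)) * (G z n * z ^ (w - (n:ℤ) - (k:ℤ))) := by
    intro n
    rw [← Finset.sum_mul, ← Finset.sum_mul, mul_assoc]
    congr 1
    rw [← key r k n hk, Finset.mul_sum]
    refine Finset.sum_congr rfl fun j hj => ?_
    have hj' : j ≤ k := Nat.lt_succ_iff.mp (Finset.mem_range.mp hj)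
    rw [← mul_assoc, ← mul_assoc, hsign j hj']
  have hsub : Finset.range (r - k + 1) ⊆ Finset.range (r + 1) :=
    Finset.range_subset_range.mpr (by omega)
  have hzero : ∀ n ∈ Finset.range (r + 1), n ∉ Finset.range (r - k + 1) →
      ((-1:ℂ) ^ k * ((Nat.choose (r - k) n : ℂ) * G z n * z ^ (r - k - n))) *
        z ^ (w - (r:ℤ)) = 0 := by
    intro n hn1 hn2
    rw [Nat.choose_eq_zero_of_lt (by simp only [Finset.mem_range] at hn1 hn2; omega)]
    simp
  have hp2 : ∀ n : ℕ, n ≤ r - k →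
      (z:ℂ) ^ (r - k - n) * z ^ (w - (r:ℤ)) = z ^ (w - (n:ℤ) - (k:ℤ)) := by
    intro n hn
    rw [← zpow_natCast z (r - k - n), ← zpow_add₀ hz]
    congr 1
    omega
  have hR : ((-1:ℂ) ^ k * ∑ n ∈ Finset.range (r - k + 1),
        (Nat.choose (r - k) n : ℂ) * G z n * z ^ (r - k - n)) * z ^ (w - (r:ℤ))
      = ∑ n ∈ Finset.range (r + 1),
          ((-1:ℂ) ^ k * (Nat.choose (r - k) n : ℂ)) * (G z n * z ^ (w - (n:ℤ) - (k:ℤ))) := by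
    rw [Finset.mul_sum, Finset.sum_mul, Finset.sum_subset hsub hzero]
    refine Finset.sum_congr rfl fun n hn => ?_
    by_cases hn' : n ≤ r - k
    · rw [← hp2 n hn']
      ring
    · rw [Nat.choose_eq_zero_of_lt (by omega)]
      simp
  rw [hR]
  exact Finset.sum_congr rfl fun n _ => hinner n
end

section
/- Exp of creation matrix entry formula: for a ∈ ℂ and the (r+1)×(r+1) creation matrix A_r with (A_r)_{i,j} = i·[i=j+1], the (ℓ,k)-entry of exp(a·A_r) equals a^{ℓ-k}/(ℓ-k)! · ℓ!/k! for ℓ ≥ k and 0 for ℓ < k; equivalently it equals C(ℓ,k)·a^{ℓ-k} for ℓ ≥ k. -/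
/-- The `(r+1)×(r+1)` creation matrix `A_r` with `(A_r)_{i,j} = i` if `i = j+1`, else `0`. -/
def creationMatrix (r : ℕ) : Matrix (Fin (r + 1)) (Fin (r + 1)) ℂ :=
  fun i j => if (i : ℕ) = (j : ℕ) + 1 then (i : ℂ) else 0

lemma creationMatrix_pow (r m : ℕ) (ℓ k : Fin (r + 1)) :
    (creationMatrix r ^ m) ℓ k =
      if (ℓ : ℕ) = (k : ℕ) + m then ((ℓ : ℕ).descFactorial m : ℂ) else 0 := by
  induction m generalizing ℓ k with
  | zero =>
    simp only [pow_zero, Matrix.one_apply, Nat.add_zero, Nat.descFactorial_zero, Nat.cast_one]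
    congr 1
    simp [Fin.ext_iff]
  | succ m ih =>
    rw [pow_succ', Matrix.mul_apply]
    simp only [creationMatrix]
    rcases Nat.eq_zero_or_pos (ℓ : ℕ) with h0 | hpos
    · rw [Finset.sum_eq_zero, eq_comm]
      · rw [if_neg]; omega
      · intro j _; rw [if_neg]; · ring
        omega
    · have hlt : (ℓ : ℕ) - 1 < r + 1 := by omega
      set j₀ : Fin (r + 1) := ⟨(ℓ : ℕ) - 1, hlt⟩
      rw [Finset.sum_eq_single j₀]
      · have hj : (ℓ : ℕ) = (j₀ : ℕ) + 1 := by simp [j₀]; omega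
        rw [if_pos hj, ih]
        by_cases hc : (j₀ : ℕ) = (k : ℕ) + m
        · rw [if_pos hc, if_pos (by omega)]
          have : (ℓ : ℕ).descFactorial (m + 1) = (ℓ : ℕ) * (j₀ : ℕ).descFactorial m := by
            have : (ℓ : ℕ) = (j₀ : ℕ) + 1 := hj
            rw [this, Nat.succ_descFactorial_succ]
          rw [this]
          push_cast
          ring
        · rw [if_neg hc, if_neg (by omega), mul_zero]
      · intro j _ hj
        rw [if_neg, zero_mul]
        intro h
        have hj0 : (j₀ : ℕ) = (ℓ : ℕ) - 1 := rfl
        exact hj (Fin.ext (by omega))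
      · intro h; exact absurd (Finset.mem_univ j₀) h

lemma creationMatrix_pow_eq_zero (r m : ℕ) (hm : r + 1 ≤ m) :
    (creationMatrix r ^ m) = 0 := by
  ext ℓ k
  rw [creationMatrix_pow]
  rw [if_neg (by omega)]
  rfl

theorem stmt14 (r : ℕ) (a : ℂ) (ℓ k : Fin (r + 1)) :
    NormedSpace.exp (a • creationMatrix r) ℓ k =
      if (k : ℕ) ≤ (ℓ : ℕ) then
        (Nat.choose ℓ k : ℂ) * a ^ ((ℓ : ℕ) - (k : ℕ))
      else 0 := by
  rw [NormedSpace.exp_eq_tsum (𝕂 := ℂ)]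
  beta_reduce
  rw [tsum_eq_sum (s := Finset.range (r + 1))
    (by
      intro m hm
      rw [smul_pow, creationMatrix_pow_eq_zero r m (by simpa using Finset.mem_range.not.mp hm)]
      simp)]
  rw [Matrix.sum_apply]
  simp only [smul_pow, Matrix.smul_apply, smul_eq_mul, creationMatrix_pow]
  by_cases hk : (k : ℕ) ≤ (ℓ : ℕ)
  · rw [if_pos hk]
    rw [Finset.sum_eq_single ((ℓ : ℕ) - (k : ℕ))]
    · rw [if_pos (by omega)]
      rw [Nat.descFactorial_eq_factorial_mul_choose, Nat.choose_symm hk]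
      have hne : ((((ℓ:ℕ) - (k:ℕ)).factorial : ℕ) : ℂ) ≠ 0 := by
        exact_mod_cast Nat.factorial_ne_zero _
      push_cast
      field_simp
    · intro m _ hm
      rw [if_neg (by omega)]
      ring
    · intro h
      exact absurd (Finset.mem_range.mpr (by omega)) h
  · rw [if_neg hk]
    apply Finset.sum_eq_zero
    intro m _
    rw [if_neg (by omega)]
    ring
end
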